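/- Let X be a second countable, locally compact Hausdorff topological space and ≤ a closed, reflexive, transitive relation on X. Then there exists a continuous function T : X → ℝ such that x ≤ y implies T(x) ≤ T(y), with T(x) = T(y) if and only if also y ≤ x (Levin's theorem). -/

import Mathlib

open Set

/-- `S` is decreasing w.r.t. relation `r`. -/
def RDec {α : Type*} (r : α → α → Prop) (S : Set α) : Prop :=
  ∀ ⦃x y⦄, r x y → y ∈ S → x ∈ S

/-- `S` is increasing w.r.t. relation `r`. -/
def RInc {α : Type*} (r : α → α → Prop) (S : Set α) : Prop :=
  ∀ ⦃x y⦄, r x y → x ∈ S → y ∈ S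

section Compact

variable {K : Type*} [TopologicalSpace K] [CompactSpace K] [T2Space K]
variable {r : K → K → Prop}

lemma isClosed_rdown (hr : IsClosed {p : K × K | r p.1 p.2}) {C : Set K} (hC : IsClosed C) :
    IsClosed {z | ∃ c ∈ C, r z c} := by
  have hs : {z | ∃ c ∈ C, r z c} = Prod.fst '' ({p : K × K | r p.1 p.2} ∩ (univ ×ˢ C)) := by
    ext z
    constructor
    · rintro ⟨c, hc, hrc⟩; exact ⟨(z, c), ⟨hrc, trivial, hc⟩, rfl⟩
    · rintro ⟨p, ⟨hp, -, hc⟩, rfl⟩; exact ⟨p.2, hc, hp⟩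
  rw [hs]
  exact (((hr.inter (isClosed_univ.prod hC)).isCompact).image continuous_fst).isClosed

lemma isClosed_rup (hr : IsClosed {p : K × K | r p.1 p.2}) {C : Set K} (hC : IsClosed C) :
    IsClosed {z | ∃ c ∈ C, r c z} := by
  have hs : {z | ∃ c ∈ C, r c z} = Prod.snd '' ({p : K × K | r p.1 p.2} ∩ (C ×ˢ univ)) := by
    ext z
    constructor
    · rintro ⟨c, hc, hrc⟩; exact ⟨(c, z), ⟨hrc, hc, trivial⟩, rfl⟩
    · rintro ⟨p, ⟨hp, hc, -⟩, rfl⟩; exact ⟨p.1, hc, hp⟩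
  rw [hs]
  exact (((hr.inter (hC.prod isClosed_univ)).isCompact).image continuous_snd).isClosed

lemma point_sep (hrefl : ∀ x, r x x) (htrans : ∀ ⦃x y z⦄, r x y → r y z → r x z)
    (hr : IsClosed {p : K × K | r p.1 p.2}) {a b : K} (hab : ¬ r b a) :
    ∃ V W : Set K, IsOpen V ∧ IsOpen W ∧ RDec r V ∧ RInc r W ∧ a ∈ V ∧ b ∈ W ∧
      Disjoint V W := by
  have hdowna : IsClosed {z | r z a} :=
    hr.preimage (Continuous.prodMk continuous_id continuous_const)
  have hupb : IsClosed {z | r b z} :=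
    hr.preimage (Continuous.prodMk continuous_const continuous_id)
  have hdisj : Disjoint {z | r b z} {z | r z a} := by
    rw [Set.disjoint_left]
    intro z hz1 hz2
    exact hab (htrans hz1 hz2)
  obtain ⟨U, V, hU, hV, hsubU, hsubV, hUV⟩ := normal_separation hupb hdowna hdisj
  refine ⟨{z | ∀ c, r c z → c ∈ V}, {z | ∀ c, r z c → c ∈ U}, ?_, ?_, ?_, ?_, ?_, ?_, ?_⟩
  · have : {z | ∀ c, r c z → c ∈ V} = ({z | ∃ c ∈ Vᶜ, r c z})ᶜ := by
      ext z; simp only [mem_setOf_eq, mem_compl_iff, not_exists, not_and]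
      constructor
      · intro h c hc hrc; exact hc (h c hrc)
      · intro h c hrc; by_contra hc; exact h c hc hrc
    rw [this]
    exact (isClosed_rup hr (hV.isClosed_compl)).isOpen_compl
  · have : {z | ∀ c, r z c → c ∈ U} = ({z | ∃ c ∈ Uᶜ, r z c})ᶜ := by
      ext z; simp only [mem_setOf_eq, mem_compl_iff, not_exists, not_and]
      constructor
      · intro h c hc hrc; exact hc (h c hrc)
      · intro h c hrc; by_contra hc; exact h c hc hrc
    rw [this]
    exact (isClosed_rdown hr (hU.isClosed_compl)).isOpen_compl
  · intro x y hxy hy c hcx; exact hy c (htrans hcx hxy)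
  · intro x y hxy hx c hyc; exact hx c (htrans hxy hyc)
  · intro c hca; exact hsubV hca
  · intro c hbc; exact hsubU hbc
  · rw [Set.disjoint_left]
    intro z hz1 hz2
    exact (Set.disjoint_left.mp hUV) (hz2 z (hrefl z)) (hz1 z (hrefl z))

lemma order_sep (hrefl : ∀ x, r x x) (htrans : ∀ ⦃x y z⦄, r x y → r y z → r x z)
    (hr : IsClosed {p : K × K | r p.1 p.2}) {A B : Set K} (hA : IsClosed A) (hB : IsClosed B)
    (hAdec : RDec r A) (hBinc : RInc r B) (hdisj : Disjoint A B) :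
    ∃ V W : Set K, IsOpen V ∧ IsOpen W ∧ RDec r V ∧ RInc r W ∧ A ⊆ V ∧ B ⊆ W ∧
      Disjoint V W := by
  -- step 1: separate A from a single point b ∉ "related" with B
  have step1 : ∀ b ∈ B, ∃ V W : Set K, IsOpen V ∧ IsOpen W ∧ RDec r V ∧ RInc r W ∧
      A ⊆ V ∧ b ∈ W ∧ Disjoint V W := by
    intro b hb
    have h1 : ∀ a : ↥A, ∃ VW : Set K × Set K, IsOpen VW.1 ∧ IsOpen VW.2 ∧ RDec r VW.1 ∧
        RInc r VW.2 ∧ (a : K) ∈ VW.1 ∧ b ∈ VW.2 ∧ Disjoint VW.1 VW.2 := by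
      rintro ⟨a, ha⟩
      have hab : ¬ r b a := fun h => Set.disjoint_left.mp hdisj (hAdec h ha) hb
      obtain ⟨V, W, h₁, h₂, h₃, h₄, h₅, h₆, h₇⟩ := point_sep hrefl htrans hr hab
      exact ⟨(V, W), h₁, h₂, h₃, h₄, h₅, h₆, h₇⟩
    choose VW hV hW hVd hWi haV hbW hVW using h1
    obtain ⟨t, ht⟩ := hA.isCompact.elim_finite_subcover (fun a : ↥A => (VW a).1)
      (fun a => hV a) (fun a ha => mem_iUnion.2 ⟨⟨a, ha⟩, haV ⟨a, ha⟩⟩)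
    refine ⟨⋃ a ∈ t, (VW a).1, ⋂ a ∈ t, (VW a).2, isOpen_biUnion (fun a _ => hV a),
      isOpen_biInter_finset (fun a _ => hW a), ?_, ?_, ht, ?_, ?_⟩
    · intro x y hxy hy
      obtain ⟨a, hat, hya⟩ := mem_iUnion₂.mp hy
      exact mem_iUnion₂.mpr ⟨a, hat, hVd a hxy hya⟩
    · intro x y hxy hx
      exact mem_iInter₂.mpr (fun a hat => hWi a hxy (mem_iInter₂.mp hx a hat))
    · exact mem_iInter₂.mpr (fun a _ => hbW a)
    · rw [Set.disjoint_left]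
      intro z hz1 hz2
      obtain ⟨a, hat, hza⟩ := mem_iUnion₂.mp hz1
      exact Set.disjoint_left.mp (hVW a) hza (mem_iInter₂.mp hz2 a hat)
  have h2 : ∀ b : ↥B, ∃ VW : Set K × Set K, IsOpen VW.1 ∧ IsOpen VW.2 ∧ RDec r VW.1 ∧
      RInc r VW.2 ∧ A ⊆ VW.1 ∧ (b : K) ∈ VW.2 ∧ Disjoint VW.1 VW.2 := by
    rintro ⟨b, hb⟩
    obtain ⟨V, W, h₁, h₂, h₃, h₄, h₅, h₆, h₇⟩ := step1 b hb
    exact ⟨(V, W), h₁, h₂, h₃, h₄, h₅, h₆, h₇⟩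
  choose VW hV hW hVd hWi hAV hbW hVW using h2
  obtain ⟨t, ht⟩ := hB.isCompact.elim_finite_subcover (fun b : ↥B => (VW b).2)
    (fun b => hW b) (fun b hb => mem_iUnion.2 ⟨⟨b, hb⟩, hbW ⟨b, hb⟩⟩)
  by_cases hte : t.Nonempty
  · refine ⟨⋂ b ∈ t, (VW b).1, ⋃ b ∈ t, (VW b).2, isOpen_biInter_finset (fun b _ => hV b),
      isOpen_biUnion (fun b _ => hW b), ?_, ?_, ?_, ht, ?_⟩
    · intro x y hxy hy
      exact mem_iInter₂.mpr (fun b hbt => hVd b hxy (mem_iInter₂.mp hy b hbt))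
    · intro x y hxy hx
      obtain ⟨b, hbt, hxb⟩ := mem_iUnion₂.mp hx
      exact mem_iUnion₂.mpr ⟨b, hbt, hWi b hxy hxb⟩
    · exact fun a ha => mem_iInter₂.mpr (fun b _ => hAV b ha)
    · rw [Set.disjoint_left]
      intro z hz1 hz2
      obtain ⟨b, hbt, hzb⟩ := mem_iUnion₂.mp hz2
      exact Set.disjoint_left.mp (hVW b) (mem_iInter₂.mp hz1 b hbt) hzb
  · rw [Finset.not_nonempty_iff_eq_empty] at hte
    subst hte
    simp only [Finset.notMem_empty, iUnion_of_empty, iUnion_empty] at ht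
    refine ⟨univ, ∅, isOpen_univ, isOpen_empty, fun _ _ _ h => h, fun _ _ _ h => h,
      subset_univ _, subset_empty_iff.mpr (subset_empty_iff.mp ht), disjoint_empty _⟩

end Compact

section Chain

variable {K : Type*} [TopologicalSpace K]

open Classical in
/-- Interpolation: pick an open decreasing set and a closed decreasing set squeezed
between `C` and `U`. -/
noncomputable def interp (r : K → K → Prop) (C U : Set K) : Set K × Set K :=
  if h : ∃ p : Set K × Set K, IsOpen p.1 ∧ IsClosed p.2 ∧ RDec r p.1 ∧ RDec r p.2 ∧
      C ⊆ p.1 ∧ p.1 ⊆ p.2 ∧ p.2 ⊆ U then h.choose else (univ, univ)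

/-- The dyadic chain of (open, closed) decreasing pairs. -/
noncomputable def chain (r : K → K → Prop) (V0 D0 W1 : Set K) : ℕ → ℕ → Set K × Set K
  | 0, 0 => (V0, D0)
  | 0, 1 => (W1, univ)
  | 0, _+2 => (univ, univ)
  | (n+1), k =>
    if Even k then chain r V0 D0 W1 n (k / 2)
    else interp r (chain r V0 D0 W1 n ((k-1)/2)).2 (chain r V0 D0 W1 n ((k+1)/2)).1

variable {r : K → K → Prop} {V0 D0 W1 : Set K}

lemma chain_succ_even (n m : ℕ) :
    chain r V0 D0 W1 (n+1) (2*m) = chain r V0 D0 W1 n m := by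
  rw [chain, if_pos (even_two_mul m)]
  congr 1
  omega

lemma chain_succ_odd (n m : ℕ) :
    chain r V0 D0 W1 (n+1) (2*m+1) =
      interp r (chain r V0 D0 W1 n m).2 (chain r V0 D0 W1 n (m+1)).1 := by
  have h1 : (2*m+1-1)/2 = m := by omega
  have h2 : (2*m+1+1)/2 = m+1 := by omega
  rw [chain, if_neg (by simp [Nat.even_add_one, parity_simps]), h1, h2]

lemma chain_cross (n p k : ℕ) :
    chain r V0 D0 W1 (n + p) (k * 2^p) = chain r V0 D0 W1 n k := by
  induction p with
  | zero => simp
  | succ p ih =>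
      have : k * 2^(p+1) = 2 * (k * 2^p) := by ring
      rw [this, show n + (p+1) = (n + p) + 1 from rfl, chain_succ_even, ih]

end Chain

section Compact

variable {K : Type*} [TopologicalSpace K] [CompactSpace K] [T2Space K]
variable {r : K → K → Prop}

-- from part1 (assume available): isClosed_rdown, isClosed_rup, order_sep
lemma order_sep' (hrefl : ∀ x : K, r x x) (htrans : ∀ ⦃x y z : K⦄, r x y → r y z → r x z)
    (hr : IsClosed {p : K × K | r p.1 p.2}) {A B : Set K} (hA : IsClosed A) (hB : IsClosed B)
    (hAdec : RDec r A) (hBinc : RDec (fun a b => r b a) B) (hdisj : Disjoint A B) :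
    ∃ V W : Set K, IsOpen V ∧ IsOpen W ∧ RDec r V ∧ RDec (fun a b => r b a) W ∧ A ⊆ V ∧
      B ⊆ W ∧ Disjoint V W := by
  have hBinc' : RInc r B := fun x y hxy hx => hBinc (x := y) (y := x) hxy hx
  obtain ⟨V, W, h1, h2, h3, h4, h5, h6, h7⟩ :=
    order_sep hrefl htrans hr hA hB hAdec hBinc' hdisj
  exact ⟨V, W, h1, h2, h3, fun x y hxy hy => h4 (x := y) (y := x) hxy hy, h5, h6, h7⟩

lemma isClosed_rdown' {C : Set K} (hr : IsClosed {p : K × K | r p.1 p.2}) (hC : IsClosed C) :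
    IsClosed {z | ∃ c ∈ C, r z c} := isClosed_rdown hr hC
lemma isClosed_rup' {C : Set K} (hr : IsClosed {p : K × K | r p.1 p.2}) (hC : IsClosed C) :
    IsClosed {z | ∃ c ∈ C, r c z} := isClosed_rup hr hC

lemma interp_spec (hrefl : ∀ x : K, r x x) (htrans : ∀ ⦃x y z : K⦄, r x y → r y z → r x z)
    (hr : IsClosed {p : K × K | r p.1 p.2}) {C U : Set K}
    (hC : IsClosed C) (hCd : RDec r C) (hU : IsOpen U) (hUd : RDec r U) (hCU : C ⊆ U) :
    IsOpen (interp r C U).1 ∧ IsClosed (interp r C U).2 ∧ RDec r (interp r C U).1 ∧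
      RDec r (interp r C U).2 ∧ C ⊆ (interp r C U).1 ∧
      (interp r C U).1 ⊆ (interp r C U).2 ∧ (interp r C U).2 ⊆ U := by
  have h : ∃ p : Set K × Set K, IsOpen p.1 ∧ IsClosed p.2 ∧ RDec r p.1 ∧ RDec r p.2 ∧
      C ⊆ p.1 ∧ p.1 ⊆ p.2 ∧ p.2 ⊆ U := by
    have hUc : IsClosed Uᶜ := hU.isClosed_compl
    have hUcInc : RDec (fun a b => r b a) Uᶜ := by
      intro x y hxy hx hmem
      exact hx (hUd hxy hmem)
    have hdisj : Disjoint C Uᶜ := disjoint_compl_right_iff_subset.mpr hCU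
    obtain ⟨V, W, hV, hW, hVd, hWi, hCV, hUW, hVW⟩ :=
      order_sep' hrefl htrans hr hC hUc hCd hUcInc hdisj
    refine ⟨(V, Wᶜ), hV, hW.isClosed_compl, hVd, ?_, hCV, ?_, ?_⟩
    · intro x y hxy hy hmem
      exact hy (hWi hxy hmem)
    · exact fun z hz => (Set.disjoint_left.mp hVW hz : z ∉ W)
    · intro z hz
      by_contra hzU
      exact hz (hUW hzU)
  classical
  rw [interp]
  rw [dif_pos h]
  exact h.choose_spec

end Compact

section Urysohn

variable {K : Type*} [TopologicalSpace K] [CompactSpace K] [T2Space K]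
variable {r : K → K → Prop}

lemma chain00 (r : K → K → Prop) (V0 D0 W1 : Set K) : chain r V0 D0 W1 0 0 = (V0, D0) := rfl
lemma chain01 (r : K → K → Prop) (V0 D0 W1 : Set K) : chain r V0 D0 W1 0 1 = (W1, univ) := rfl
lemma chain0k (r : K → K → Prop) (V0 D0 W1 : Set K) (k : ℕ) :
    chain r V0 D0 W1 0 (k+2) = (univ, univ) := rfl

theorem compact_order_urysohn (hrefl : ∀ x : K, r x x)
    (htrans : ∀ ⦃x y z : K⦄, r x y → r y z → r x z)
    (hr : IsClosed {p : K × K | r p.1 p.2}) {A B : Set K} (hA : IsClosed A) (hB : IsClosed B)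
    (hAdec : RDec r A) (hBinc : RDec (fun a b => r b a) B) (hdisj : Disjoint A B) :
    ∃ f : K → ℝ, Continuous f ∧ (∀ x y, r x y → f x ≤ f y) ∧ (∀ x ∈ A, f x = 0) ∧
      (∀ x ∈ B, f x = 1) ∧ ∀ x, f x ∈ Icc (0:ℝ) 1 := by
  obtain ⟨V0, W, hV, hW, hVd, hWi, hAV, hBW, hVW⟩ :=
    order_sep' hrefl htrans hr hA hB hAdec hBinc hdisj
  set D0 := Wᶜ with hD0def
  set W1 := Bᶜ with hW1def
  have hD0 : IsClosed D0 := hW.isClosed_compl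
  have hD0d : RDec r D0 := fun x y hxy hy hm => hy (hWi hxy hm)
  have hVD0 : V0 ⊆ D0 := fun z hz => Set.disjoint_left.mp hVW hz
  have hD0W1 : D0 ⊆ W1 := fun z hz hzB => hz (hBW hzB)
  have hW1open : IsOpen W1 := hB.isOpen_compl
  have hW1d : RDec r W1 := fun x y hxy hy hm => hy (hBinc hxy hm)
  set U : ℕ → ℕ → Set K := fun n k => (chain r V0 D0 W1 n k).1 with hUdef
  set D : ℕ → ℕ → Set K := fun n k => (chain r V0 D0 W1 n k).2 with hDdef
  have hinv : ∀ n k, IsOpen (U n k) ∧ IsClosed (D n k) ∧ RDec r (U n k) ∧ RDec r (D n k) ∧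
      U n k ⊆ D n k ∧ D n k ⊆ U n (k+1) := by
    intro n
    induction n with
    | zero =>
        intro k
        match k with
        | 0 =>
            refine ⟨hV, hD0, hVd, hD0d, hVD0, ?_⟩
            show D0 ⊆ (chain r V0 D0 W1 0 1).1
            rw [chain01]
            exact hD0W1
        | 1 =>
            refine ⟨hW1open, ?_, hW1d, ?_, ?_, ?_⟩ <;>
              simp only [hUdef, hDdef, chain01, chain0k]
            · exact isClosed_univ
            · exact fun _ _ _ h => h
            · exact subset_univ _
            · exact subset_univ _
        | (k+2) =>
            refine ⟨?_, ?_, ?_, ?_, ?_, ?_⟩ <;>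
              simp only [hUdef, hDdef, chain0k]
            · exact isOpen_univ
            · exact isClosed_univ
            · exact fun _ _ _ h => h
            · exact fun _ _ _ h => h
            · exact subset_univ _
            · exact subset_univ _
    | succ n ih =>
        intro k
        rcases Nat.even_or_odd k with ⟨m, hm⟩ | ⟨m, hm⟩
        · have hk : k = 2*m := by omega
          subst hk
          have hodd := chain_succ_odd (r := r) (V0 := V0) (D0 := D0) (W1 := W1) n m
          have hspec := interp_spec hrefl htrans hr (ih m).2.1 (ih m).2.2.2.1
            (ih (m+1)).1 (ih (m+1)).2.2.1 (ih m).2.2.2.2.2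
          refine ⟨?_, ?_, ?_, ?_, ?_, ?_⟩ <;>
            simp only [hUdef, hDdef, chain_succ_even]
          · exact (ih m).1
          · exact (ih m).2.1
          · exact (ih m).2.2.1
          · exact (ih m).2.2.2.1
          · exact (ih m).2.2.2.2.1
          · show (chain r V0 D0 W1 n m).2 ⊆ (chain r V0 D0 W1 (n+1) (2*m+1)).1
            rw [hodd]
            exact hspec.2.2.2.2.1
        · have hk : k = 2*m+1 := by omega
          subst hk
          have hodd := chain_succ_odd (r := r) (V0 := V0) (D0 := D0) (W1 := W1) n m
          have hspec := interp_spec hrefl htrans hr (ih m).2.1 (ih m).2.2.2.1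
            (ih (m+1)).1 (ih (m+1)).2.2.1 (ih m).2.2.2.2.2
          refine ⟨?_, ?_, ?_, ?_, ?_, ?_⟩ <;>
            simp only [hUdef, hDdef, hodd]
          · exact hspec.1
          · exact hspec.2.1
          · exact hspec.2.2.1
          · exact hspec.2.2.2.1
          · exact hspec.2.2.2.2.2.1
          · show (interp r (chain r V0 D0 W1 n m).2 (chain r V0 D0 W1 n (m+1)).1).2 ⊆
              (chain r V0 D0 W1 (n+1) (2*m+1+1)).1
            have h2 : 2*m+1+1 = 2*(m+1) := by omega
            rw [h2, chain_succ_even]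
            exact hspec.2.2.2.2.2.2
  have hUsubD : ∀ n k, U n k ⊆ D n k := fun n k => (hinv n k).2.2.2.2.1
  have hDsubU : ∀ n k, D n k ⊆ U n (k+1) := fun n k => (hinv n k).2.2.2.2.2
  have hUmono : ∀ n k k', k ≤ k' → U n k ⊆ U n k' := by
    intro n k k' h
    induction k' with
    | zero => rw [Nat.le_zero.mp h]
    | succ j ih =>
        rcases Nat.lt_or_ge k (j+1) with h' | h'
        · exact (ih (by omega)).trans ((hUsubD n j).trans (hDsubU n j))
        · rw [Nat.le_antisymm h h']
  have hUD : ∀ n k k', k ≤ k' → U n k ⊆ D n k' :=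
    fun n k k' h => (hUmono n k k' h).trans (hUsubD n k')
  have hUcross : ∀ n p k, U (n + p) (k * 2^p) = U n k :=
    fun n p k => congrArg Prod.fst (chain_cross n p k)
  have hDcross : ∀ n p k, D (n + p) (k * 2^p) = D n k :=
    fun n p k => congrArg Prod.snd (chain_cross n p k)
  -- the key cross-level comparison
  have hkey : ∀ m j n k, j * 2^n ≤ k * 2^m → U m j ⊆ D n k := by
    intro m j n k h
    have h1 : U m j = U (m + n) (j * 2^n) := (hUcross m n j).symm
    have h2 : D n k = D (m + n) (k * 2^m) := by
      rw [Nat.add_comm m n]; exact (hDcross n m k).symm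
    rw [h1, h2]
    exact hUD _ _ _ h
  set S : K → Set ℝ := fun x => insert 1 {q | ∃ n k, x ∈ U n k ∧ q = (k:ℝ) / 2^n} with hSdef
  set f : K → ℝ := fun x => sInf (S x) with hfdef
  have hSne : ∀ x, (S x).Nonempty := fun x => ⟨1, mem_insert _ _⟩
  have hSlb : ∀ x, ∀ q ∈ S x, (0:ℝ) ≤ q := by
    intro x q hq
    rcases hq with hq | ⟨n, k, _, rfl⟩
    · rw [hq]; norm_num
    · positivity
  have hbdd : ∀ x, BddBelow (S x) := fun x => ⟨0, fun q hq => hSlb x q hq⟩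
  have hf0 : ∀ x, 0 ≤ f x := fun x => le_csInf (hSne x) (hSlb x)
  have hf1 : ∀ x, f x ≤ 1 := fun x => csInf_le (hbdd x) (mem_insert _ _)
  have key_le : ∀ x n k, x ∈ U n k → f x ≤ (k:ℝ) / 2^n := by
    intro x n k hx
    exact csInf_le (hbdd x) (mem_insert_iff.mpr (Or.inr ⟨n, k, hx, rfl⟩))
  have key_ge : ∀ x n k, k ≤ 2^n → x ∉ D n k → (k:ℝ) / 2^n ≤ f x := by
    intro x n k hk hx
    refine le_csInf (hSne x) ?_
    intro q hq
    rcases hq with hq | ⟨m, j, hxmj, rfl⟩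
    · rw [hq]
      rw [div_le_one (by positivity)]
      exact_mod_cast hk
    · by_contra hcon
      push_neg at hcon
      have hjk : j * 2^n ≤ k * 2^m := by
        have := (div_lt_div_iff₀ (by positivity : (0:ℝ) < 2^m)
          (by positivity : (0:ℝ) < 2^n)).mp hcon
        have : (j:ℝ) * 2^n < (k:ℝ) * 2^m := by linarith
        exact_mod_cast this.le
      exact hx (hkey m j n k hjk hxmj)
  refine ⟨f, ?_, ?_, ?_, ?_, fun x => ⟨hf0 x, hf1 x⟩⟩
  · -- continuity
    rw [continuous_iff_continuousAt]
    intro x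
    rw [ContinuousAt, Metric.tendsto_nhds]
    intro ε hε
    obtain ⟨n, hn⟩ := pow_unbounded_of_one_lt (2/ε) (one_lt_two (α := ℝ))
    have h2n : (0:ℝ) < 2^n := by positivity
    have hεn : (2:ℝ)/2^n < ε := by
      rw [div_lt_iff₀ hε] at hn
      rw [div_lt_iff₀ h2n]
      linarith
    classical
    by_cases hx : ∃ k, k ≤ 2^n ∧ x ∈ U n k
    · set k0 := Nat.find hx with hk0def
      obtain ⟨hk0le, hk0mem⟩ : k0 ≤ 2^n ∧ x ∈ U n k0 := Nat.find_spec hx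
      have hk0min : ∀ k, k < k0 → x ∉ U n k := by
        intro k hk hmem
        exact Nat.find_min hx hk ⟨(lt_of_lt_of_le hk hk0le).le, hmem⟩
      rcases Nat.lt_or_ge k0 2 with hcase | hcase
      · refine Filter.eventually_of_mem (((hinv n k0).1).mem_nhds hk0mem) ?_
        intro y hy
        have hk0r : ((k0:ℕ):ℝ) / 2^n ≤ 2 / 2^n := by
          gcongr
          exact_mod_cast hcase.le
        have h1 := key_le y n k0 hy
        have h2 := key_le x n k0 hk0mem
        have h3 := hf0 y
        have h4 := hf0 x
        rw [Real.dist_eq, abs_sub_lt_iff]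
        constructor <;> linarith
      · set m := k0 - 2 with hmdef
        have hm : k0 = m + 2 := by omega
        have hxm : x ∉ D n m := by
          intro h
          exact hk0min (m+1) (by omega) ((hinv n m).2.2.2.2.2 h)
        have hNopen : IsOpen (U n k0 \ D n m) := (hinv n k0).1.sdiff (hinv n m).2.1
        refine Filter.eventually_of_mem (hNopen.mem_nhds ⟨hk0mem, hxm⟩) ?_
        intro y hy
        have hdiff : ((k0:ℕ):ℝ)/2^n - ((m:ℕ):ℝ)/2^n = 2/2^n := by
          rw [hm]; push_cast; ring
        have h1 := key_le y n k0 hy.1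
        have h2 := key_le x n k0 hk0mem
        have h3 := key_ge y n m (by omega) hy.2
        have h4 := key_ge x n m (by omega) hxm
        rw [Real.dist_eq, abs_sub_lt_iff]
        constructor <;> linarith
    · push_neg at hx
      have h1n : 1 ≤ 2^n := Nat.one_le_two_pow
      have hxm : x ∉ D n (2^n - 1) := by
        intro h
        have : x ∈ U n (2^n - 1 + 1) := (hinv n (2^n - 1)).2.2.2.2.2 h
        rw [Nat.sub_add_cancel h1n] at this
        exact hx (2^n) le_rfl this
      refine Filter.eventually_of_mem (((hinv n (2^n - 1)).2.1.isOpen_compl).mem_nhds hxm) ?_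
      intro y hy
      have hc : (((2^n - 1 : ℕ)):ℝ)/2^n = 1 - 1/2^n := by
        rw [Nat.cast_sub h1n]
        push_cast
        field_simp
      have h1 := key_ge y n (2^n - 1) (by omega) hy
      have h2 := key_ge x n (2^n - 1) (by omega) hxm
      have h3 := hf1 y
      have h4 := hf1 x
      have e1 : (2:ℝ)/2^n = 2 * (1/2^n) := by ring
      have h5 : (0:ℝ) < 1/2^n := by positivity
      rw [Real.dist_eq, abs_sub_lt_iff]
      constructor <;> (rw [hc] at h1 h2; linarith)
  · -- isotone
    intro x y hxy
    refine csInf_le_csInf (hbdd x) (hSne y) ?_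
    intro q hq
    rcases hq with hq | ⟨n, k, hy, rfl⟩
    · exact hq ▸ mem_insert _ _
    · exact mem_insert_iff.mpr (Or.inr ⟨n, k, (hinv n k).2.2.1 hxy hy, rfl⟩)
  · -- f = 0 on A
    intro x hxA
    have h1 : x ∈ U 0 0 := hAV hxA
    have h2 := key_le x 0 0 h1
    norm_num at h2
    exact le_antisymm h2 (hf0 x)
  · -- f = 1 on B
    intro x hxB
    refine le_antisymm (hf1 x) (le_csInf (hSne x) ?_)
    intro q hq
    rcases hq with hq | ⟨m, j, hxmj, rfl⟩
    · rw [hq]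
    · rcases Nat.lt_or_ge j (2^m) with hj | hj
      · exfalso
        have hsub : U m j ⊆ U m (2^m) := hUmono m j (2^m) hj.le
        have : U m (2^m) = U 0 1 := by
          have := hUcross 0 m 1
          rw [one_mul] at this
          simpa using this
        have hx1 : x ∈ U 0 1 := this ▸ hsub hxmj
        have : U 0 1 = W1 := congrArg Prod.fst (chain01 r V0 D0 W1)
        rw [this] at hx1
        exact hx1 hxB
      · rw [le_div_iff₀ (by positivity), one_mul]
        exact_mod_cast hj

theorem order_approx (hrefl : ∀ x : K, r x x)
    (htrans : ∀ ⦃x y z : K⦄, r x y → r y z → r x z)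
    (hr : IsClosed {p : K × K | r p.1 p.2}) {C : Set K} (hC : IsClosed C)
    {f : K → ℝ} (hf : Continuous f) (hmono : ∀ x ∈ C, ∀ y ∈ C, r x y → f x ≤ f y)
    (hrange : ∀ x ∈ C, f x ∈ Icc (0:ℝ) 1) (n : ℕ) (hn : 0 < n) :
    ∃ g : K → ℝ, Continuous g ∧ (∀ x y, r x y → g x ≤ g y) ∧ (∀ x, g x ∈ Icc (0:ℝ) 1) ∧
      ∀ x ∈ C, |g x - f x| ≤ 1/n := by
  have hnR : (0:ℝ) < n := by exact_mod_cast hn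
  have key : ∀ k : ℕ, ∃ φ : K → ℝ, Continuous φ ∧ (∀ x y, r x y → φ x ≤ φ y) ∧
      (∀ x ∈ {z | ∃ c ∈ C, f c ≤ (k:ℝ)/n ∧ r z c}, φ x = 0) ∧
      (∀ x ∈ {z | ∃ c ∈ C, ((k:ℝ)+1)/n ≤ f c ∧ r c z}, φ x = 1) ∧
      ∀ x, φ x ∈ Icc (0:ℝ) 1 := by
    intro k
    have hCk : IsClosed {c | c ∈ C ∧ f c ≤ (k:ℝ)/n} :=
      hC.inter (isClosed_le hf continuous_const)
    have hCk' : IsClosed {c | c ∈ C ∧ ((k:ℝ)+1)/n ≤ f c} :=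
      hC.inter (isClosed_le continuous_const hf)
    have hA : IsClosed {z | ∃ c ∈ C, f c ≤ (k:ℝ)/n ∧ r z c} := by
      have : {z | ∃ c ∈ C, f c ≤ (k:ℝ)/n ∧ r z c}
          = {z | ∃ c ∈ {c | c ∈ C ∧ f c ≤ (k:ℝ)/n}, r z c} := by
        ext z; constructor
        · rintro ⟨c, h1, h2, h3⟩; exact ⟨c, ⟨h1, h2⟩, h3⟩
        · rintro ⟨c, ⟨h1, h2⟩, h3⟩; exact ⟨c, h1, h2, h3⟩
      rw [this]; exact isClosed_rdown' hr hCk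
    have hB : IsClosed {z | ∃ c ∈ C, ((k:ℝ)+1)/n ≤ f c ∧ r c z} := by
      have : {z | ∃ c ∈ C, ((k:ℝ)+1)/n ≤ f c ∧ r c z}
          = {z | ∃ c ∈ {c | c ∈ C ∧ ((k:ℝ)+1)/n ≤ f c}, r c z} := by
        ext z; constructor
        · rintro ⟨c, h1, h2, h3⟩; exact ⟨c, ⟨h1, h2⟩, h3⟩
        · rintro ⟨c, ⟨h1, h2⟩, h3⟩; exact ⟨c, h1, h2, h3⟩
      rw [this]; exact isClosed_rup' hr hCk'
    have hAdec : RDec r {z | ∃ c ∈ C, f c ≤ (k:ℝ)/n ∧ r z c} := by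
      rintro x y hxy ⟨c, h1, h2, h3⟩; exact ⟨c, h1, h2, htrans hxy h3⟩
    have hBinc : RDec (fun a b => r b a) {z | ∃ c ∈ C, ((k:ℝ)+1)/n ≤ f c ∧ r c z} := by
      rintro x y hxy ⟨c, h1, h2, h3⟩; exact ⟨c, h1, h2, htrans h3 hxy⟩
    have hdisj : Disjoint {z | ∃ c ∈ C, f c ≤ (k:ℝ)/n ∧ r z c}
        {z | ∃ c ∈ C, ((k:ℝ)+1)/n ≤ f c ∧ r c z} := by
      rw [Set.disjoint_left]
      rintro z ⟨a, haC, hale, hza⟩ ⟨b, hbC, hbge, hbz⟩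
      have hba : r b a := htrans hbz hza
      have := hmono b hbC a haC hba
      have hlt : (k:ℝ)/n < ((k:ℝ)+1)/n := by
        have h : ((k:ℝ)+1)/n - (k:ℝ)/n = 1/n := by ring
        have h2 : (0:ℝ) < 1/n := by positivity
        linarith
      linarith
    obtain ⟨φ, h1, h2, h3, h4, h5⟩ :=
      compact_order_urysohn hrefl htrans hr hA hB hAdec hBinc hdisj
    exact ⟨φ, h1, h2, h3, h4, h5⟩
  choose φ hφc hφm hφ0 hφ1 hφI using key
  refine ⟨fun x => (∑ k ∈ Finset.range n, φ k x) / n, ?_, ?_, ?_, ?_⟩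
  · exact (continuous_finset_sum _ (fun k _ => hφc k)).div_const _
  · intro x y hxy
    show (∑ k ∈ Finset.range n, φ k x)/(n:ℝ) ≤ (∑ k ∈ Finset.range n, φ k y)/(n:ℝ)
    gcongr with k _
    exact hφm k x y hxy
  · intro x
    constructor
    · apply div_nonneg ?_ hnR.le
      exact Finset.sum_nonneg (fun k _ => (hφI k x).1)
    · rw [div_le_one hnR]
      calc ∑ k ∈ Finset.range n, φ k x ≤ ∑ k ∈ Finset.range n, 1 :=
            Finset.sum_le_sum (fun k _ => (hφI k x).2)
        _ = n := by simp
  · intro c hcC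
    show |(∑ k ∈ Finset.range n, φ k c) / (n:ℝ) - f c| ≤ 1/(n:ℝ)
    set j := ⌊(n:ℝ) * f c⌋₊ with hjdef
    have hfc0 : 0 ≤ f c := (hrange c hcC).1
    have hfc1 : f c ≤ 1 := (hrange c hcC).2
    have hjle : (j:ℝ) ≤ n * f c := Nat.floor_le (by positivity)
    have hjgt : (n:ℝ) * f c < j + 1 := Nat.lt_floor_add_one _
    have hone : ∀ k, k < j → φ k c = 1 := by
      intro k hk
      apply hφ1 k
      refine ⟨c, hcC, ?_, hrefl c⟩
      rw [div_le_iff₀ hnR]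
      have : (k:ℝ) + 1 ≤ j := by exact_mod_cast hk
      linarith
    have hzero : ∀ k, j < k → φ k c = 0 := by
      intro k hk
      apply hφ0 k
      refine ⟨c, hcC, ?_, hrefl c⟩
      rw [le_div_iff₀ hnR]
      have : (j:ℝ) + 1 ≤ k := by exact_mod_cast hk
      linarith
    have hlow : (↑(min j n) : ℝ) ≤ ∑ k ∈ Finset.range n, φ k c := by
      calc (↑(min j n) : ℝ) = ∑ k ∈ Finset.range (min j n), (1:ℝ) := by simp
        _ = ∑ k ∈ Finset.range (min j n), φ k c := by
            refine Finset.sum_congr rfl (fun k hk => ?_)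
            rw [Finset.mem_range] at hk
            exact (hone k (lt_of_lt_of_le hk (min_le_left _ _))).symm
        _ ≤ ∑ k ∈ Finset.range n, φ k c := by
            refine Finset.sum_le_sum_of_subset_of_nonneg ?_ (fun k _ _ => (hφI k c).1)
            exact Finset.range_subset_range.mpr (min_le_right _ _)
    have hhigh : ∑ k ∈ Finset.range n, φ k c ≤ (j:ℝ) + 1 := by
      calc ∑ k ∈ Finset.range n, φ k c
          ≤ ∑ k ∈ Finset.range n, (if k ≤ j then (1:ℝ) else 0) := by
            refine Finset.sum_le_sum (fun k _ => ?_)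
            by_cases hkj : k ≤ j
            · rw [if_pos hkj]; exact (hφI k c).2
            · rw [if_neg hkj, hzero k (by omega)]
        _ = ((Finset.range n).filter (· ≤ j)).card • (1:ℝ) := by
            rw [Finset.sum_ite, Finset.sum_const, Finset.sum_const_zero, add_zero]
        _ ≤ (j:ℝ) + 1 := by
            rw [nsmul_eq_mul, mul_one]
            have : ((Finset.range n).filter (· ≤ j)).card ≤ j + 1 := by
              calc ((Finset.range n).filter (· ≤ j)).card
                  ≤ (Finset.range (j+1)).card := by
                    apply Finset.card_le_card
                    intro k hk
                    simp only [Finset.mem_filter, Finset.mem_range] at hk ⊢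
                    omega
                _ = j + 1 := Finset.card_range _
            exact_mod_cast this
    rcases Nat.lt_or_ge j n with hjn | hjn
    · have hmin : min j n = j := min_eq_left hjn.le
      have hlow' : (j:ℝ) ≤ ∑ k ∈ Finset.range n, φ k c := by
        rw [hmin] at hlow; exact_mod_cast hlow
      have hg_lo : (j:ℝ)/n ≤ (∑ k ∈ Finset.range n, φ k c)/n := by gcongr
      have hg_hi : (∑ k ∈ Finset.range n, φ k c)/n ≤ ((j:ℝ)+1)/n := by gcongr
      have hf_lo : (j:ℝ)/n ≤ f c := by
        rw [div_le_iff₀ hnR]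
        have := mul_comm (f c) (n:ℝ)
        linarith
      have hf_hi : f c ≤ ((j:ℝ)+1)/n := by
        rw [le_div_iff₀ hnR]
        have := mul_comm (f c) (n:ℝ)
        linarith
      have hdiff : ((j:ℝ)+1)/n - (j:ℝ)/n = 1/n := by ring
      rw [abs_sub_le_iff]
      constructor <;> linarith
    · -- j ≥ n : f c = 1 and g c = 1
      have hf1' : (1:ℝ) ≤ f c := by
        have : (n:ℝ) ≤ j := by exact_mod_cast hjn
        nlinarith
      have hfc : f c = 1 := le_antisymm hfc1 hf1'
      have hmin : min j n = n := min_eq_right hjn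
      have hg1 : (∑ k ∈ Finset.range n, φ k c) / (n:ℝ) = 1 := by
        have hle : (n:ℝ) ≤ ∑ k ∈ Finset.range n, φ k c := by
          rw [hmin] at hlow; exact_mod_cast hlow
        have hge : ∑ k ∈ Finset.range n, φ k c ≤ n := by
          calc ∑ k ∈ Finset.range n, φ k c ≤ ∑ k ∈ Finset.range n, 1 :=
                Finset.sum_le_sum (fun k _ => (hφI k c).2)
            _ = n := by simp
        rw [le_antisymm hge hle, div_self hnR.ne']
      rw [hg1, hfc, sub_self, abs_zero]
      positivity

end Urysohn

open Filter Topology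

section Key

variable {X : Type*} [TopologicalSpace X] [SecondCountableTopology X]
    [LocallyCompactSpace X] [T2Space X]

theorem key_sep (le : X → X → Prop) (le_refl : ∀ x, le x x)
    (le_trans : ∀ x y z, le x y → le y z → le x z)
    (le_closed : IsClosed {p : X × X | le p.1 p.2}) (x₀ y₀ : X) (hnc : ¬ le y₀ x₀) :
    ∃ f : X → ℝ, Continuous f ∧ (∀ x y, le x y → f x ≤ f y) ∧
      (∀ x, f x ∈ Icc (0:ℝ) 1) ∧ f x₀ < f y₀ := by
  classical
  set E := CompactExhaustion.choice X with hEdef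
  set N : ℕ := max (E.find x₀) (E.find y₀) with hNdef
  set L : ℕ → Set X := fun n => E (N + n) with hLdef
  have hLmono : ∀ {m n}, m ≤ n → L m ⊆ L n := fun {m n} h => E.subset (by omega)
  have hLcompact : ∀ n, IsCompact (L n) := fun n => E.isCompact _
  have hLclosed : ∀ n, IsClosed (L n) := fun n => (hLcompact n).isClosed
  have hx₀ : x₀ ∈ L 0 := E.subset (by omega : E.find x₀ ≤ N + 0) (E.mem_find x₀)
  have hy₀ : y₀ ∈ L 0 := E.subset (by omega : E.find y₀ ≤ N + 0) (E.mem_find y₀)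
  have hmem : ∀ z : X, ∃ m, z ∈ L m := by
    intro z
    exact ⟨E.find z, E.subset (by omega : E.find z ≤ N + E.find z) (E.mem_find z)⟩
  -- compact space structures on the subtypes
  haveI : ∀ n, CompactSpace (L n) := fun n => isCompact_iff_compactSpace.mp (hLcompact n)
  have hrn : ∀ n, IsClosed {p : ↥(L n) × ↥(L n) | le p.1.1 p.2.1} := by
    intro n
    exact le_closed.preimage ((continuous_subtype_val.comp continuous_fst).prodMk
      (continuous_subtype_val.comp continuous_snd))
  have hrefl' : ∀ n, ∀ z : ↥(L n), le z.1 z.1 := fun n z => le_refl z.1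
  have htrans' : ∀ n, ∀ ⦃a b c : ↥(L n)⦄, le a.1 b.1 → le b.1 c.1 → le a.1 c.1 :=
    fun n a b c h1 h2 => le_trans _ _ _ h1 h2
  have hclamp : ∀ t ∈ Icc (0:ℝ) 1, max 0 (min 1 t) = t := by
    intro t ht
    rw [min_eq_right ht.2, max_eq_right ht.1]
  have hclampI : ∀ t : ℝ, max 0 (min 1 t) ∈ Icc (0:ℝ) 1 :=
    fun t => ⟨le_max_left _ _, max_le zero_le_one (min_le_left _ _)⟩
  set Good : ℕ → (X → ℝ) → Prop := fun n f => Continuous f ∧ (∀ x, f x ∈ Icc (0:ℝ) 1) ∧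
    (∀ x ∈ L n, ∀ y ∈ L n, le x y → f x ≤ f y) with hGooddef
  -- base function
  have hbase : ∃ f : X → ℝ, Good 0 f ∧ f x₀ = 0 ∧ f y₀ = 1 := by
    have hA : IsClosed {z : ↥(L 0) | le z.1 x₀} :=
      (le_closed.preimage ((continuous_id.prodMk continuous_const))).preimage
        continuous_subtype_val
    have hB : IsClosed {z : ↥(L 0) | le y₀ z.1} :=
      (le_closed.preimage ((continuous_const.prodMk continuous_id))).preimage
        continuous_subtype_val
    have hAdec : RDec (fun a b : ↥(L 0) => le a.1 b.1) {z : ↥(L 0) | le z.1 x₀} :=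
      fun a b hab hb => le_trans _ _ _ hab hb
    have hBinc : RDec (fun a b : ↥(L 0) => le b.1 a.1) {z : ↥(L 0) | le y₀ z.1} :=
      fun a b hab hb => le_trans _ _ _ hb hab
    have hdisj : Disjoint {z : ↥(L 0) | le z.1 x₀} {z : ↥(L 0) | le y₀ z.1} := by
      rw [Set.disjoint_left]
      rintro z h1 h2
      exact hnc (le_trans _ _ _ h2 h1)
    obtain ⟨u, huc, hum, hu0, hu1, huI⟩ := compact_order_urysohn (r := fun a b : ↥(L 0) =>
      le a.1 b.1) (hrefl' 0) (htrans' 0) (hrn 0) hA hB hAdec hBinc hdisj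
    obtain ⟨g, hg⟩ := ContinuousMap.exists_restrict_eq (hLclosed 0) ⟨u, huc⟩
    have hgu : ∀ z : ↥(L 0), g z = u z := fun z => ContinuousMap.congr_fun hg z
    have hfeq : ∀ (z : X) (hz : z ∈ L 0), max 0 (min 1 (g z)) = u ⟨z, hz⟩ := by
      intro z hz
      rw [show g z = u ⟨z, hz⟩ from hgu ⟨z, hz⟩]
      exact hclamp _ (huI _)
    refine ⟨fun x => max 0 (min 1 (g x)), ⟨?_, fun x => hclampI _, ?_⟩, ?_, ?_⟩
    · exact continuous_const.max (continuous_const.min g.continuous)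
    · intro x hx y hy hxy
      beta_reduce
      rw [hfeq x hx, hfeq y hy]
      exact hum _ _ hxy
    · beta_reduce
      rw [hfeq x₀ hx₀]
      exact hu0 _ (le_refl x₀)
    · beta_reduce
      rw [hfeq y₀ hy₀]
      exact hu1 _ (le_refl y₀)
  -- inductive step
  have hstep : ∀ n (f : X → ℝ), Good n f →
      ∃ f' : X → ℝ, Good (n+1) f' ∧ ∀ z ∈ L n, |f' z - f z| ≤ (1:ℝ)/2^(n+3) := by
    intro n f hf
    obtain ⟨hfc, hfI, hfm⟩ := hf
    set C : Set ↥(L (n+1)) := {z | z.1 ∈ L n} with hCdef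
    have hC : IsClosed C := (hLclosed n).preimage continuous_subtype_val
    have hmono : ∀ x ∈ C, ∀ y ∈ C, le x.1 y.1 → f x.1 ≤ f y.1 :=
      fun x hx y hy hxy => hfm x.1 hx y.1 hy hxy
    obtain ⟨g, hgc, hgm, hgI, hgap⟩ := order_approx (r := fun a b : ↥(L (n+1)) => le a.1 b.1)
      (hrefl' (n+1)) (htrans' (n+1)) (hrn (n+1)) hC
      (hf := hfc.comp continuous_subtype_val) hmono (fun x _ => hfI x.1)
      (2^(n+3)) (by positivity)
    obtain ⟨G, hG⟩ := ContinuousMap.exists_restrict_eq (hLclosed (n+1)) ⟨g, hgc⟩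
    have hGu : ∀ z : ↥(L (n+1)), G z = g z := fun z => ContinuousMap.congr_fun hG z
    have hfeq : ∀ (z : X) (hz : z ∈ L (n+1)), max 0 (min 1 (G z)) = g ⟨z, hz⟩ := by
      intro z hz
      rw [show G z = g ⟨z, hz⟩ from hGu ⟨z, hz⟩]
      exact hclamp _ (hgI _)
    have hcast : ((2^(n+3) : ℕ) : ℝ) = 2^(n+3) := by push_cast; ring
    refine ⟨fun x => max 0 (min 1 (G x)), ⟨?_, fun x => hclampI _, ?_⟩, ?_⟩
    · exact continuous_const.max (continuous_const.min G.continuous)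
    · intro x hx y hy hxy
      beta_reduce
      rw [hfeq x hx, hfeq y hy]
      exact hgm _ _ hxy
    · intro z hz
      have hz' : z ∈ L (n+1) := hLmono (by omega) hz
      beta_reduce
      rw [hfeq z hz']
      have := hgap ⟨z, hz'⟩ hz
      rw [hcast] at this
      exact this
  choose f₀ hf₀ using hbase
  obtain ⟨hf₀good, hf₀x, hf₀y⟩ := hf₀
  choose stepf hstep1 hstep2 using hstep
  set u : ∀ n : ℕ, {f : X → ℝ // Good n f} :=
    fun n => Nat.rec ⟨f₀, hf₀good⟩ (fun n p => ⟨stepf n p.1 p.2, hstep1 n p.1 p.2⟩) n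
    with hudef
  have hu : ∀ n, Good n (u n).1 := fun n => (u n).2
  have huc : ∀ n, Continuous (u n).1 := fun n => (hu n).1
  have huI : ∀ n x, (u n).1 x ∈ Icc (0:ℝ) 1 := fun n => (hu n).2.1
  have hum : ∀ n, ∀ x ∈ L n, ∀ y ∈ L n, le x y → (u n).1 x ≤ (u n).1 y :=
    fun n => (hu n).2.2
  have hclose : ∀ n, ∀ z ∈ L n, |(u (n+1)).1 z - (u n).1 z| ≤ (1:ℝ)/2^(n+3) :=
    fun n => hstep2 n (u n).1 (u n).2
  -- telescoping estimate
  have htel : ∀ n p z, z ∈ L n →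
      |(u (n+p)).1 z - (u n).1 z| ≤ (1:ℝ)/2^(n+2) - 1/2^(n+p+2) := by
    intro n p z hz
    induction p with
    | zero => simp
    | succ p ih =>
        have hz' : z ∈ L (n+p) := hLmono (by omega) hz
        have h1 := hclose (n+p) z hz'
        have h2 : (1:ℝ)/2^(n+p+2) = 2 * (1/2^(n+p+3)) := by
          rw [show n+p+3 = (n+p+2)+1 from rfl, pow_succ]
          have := pow_pos (show (0:ℝ) < 2 by norm_num) (n+p+2)
          field_simp
          ring
        calc |(u (n+(p+1))).1 z - (u n).1 z|
            ≤ |(u (n+p+1)).1 z - (u (n+p)).1 z| + |(u (n+p)).1 z - (u n).1 z| := by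
              rw [show n+(p+1) = (n+p)+1 from rfl]
              exact abs_sub_le _ _ _
          _ ≤ (1:ℝ)/2^(n+p+3) + ((1:ℝ)/2^(n+2) - 1/2^(n+p+2)) := add_le_add h1 ih
          _ ≤ (1:ℝ)/2^(n+2) - 1/2^(n+(p+1)+2) := by
              rw [show n+(p+1)+2 = n+p+3 from by omega]
              linarith
  -- pointwise limits
  have hcauchy : ∀ z : X, ∃ l : ℝ, Tendsto (fun n => (u n).1 z) atTop (𝓝 l) := by
    intro z
    obtain ⟨m, hm⟩ := hmem z
    have : CauchySeq (fun n => (u n).1 z) := by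
      rw [Metric.cauchySeq_iff']
      intro ε hε
      obtain ⟨M, hM⟩ := pow_unbounded_of_one_lt (1/ε) (one_lt_two (α := ℝ))
      refine ⟨max m M, ?_⟩
      intro n hn
      have hzL : z ∈ L (max m M) := hLmono (le_max_left _ _) hm
      have h1 : |(u n).1 z - (u (max m M)).1 z| ≤ (1:ℝ)/2^(max m M + 2) := by
        obtain ⟨p, rfl⟩ := Nat.exists_eq_add_of_le hn
        have := htel (max m M) p z hzL
        have hpos : (0:ℝ) < 1/2^(max m M + p + 2) := by positivity
        linarith
      have h2 : (1:ℝ)/2^(max m M + 2) < ε := by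
        rw [div_lt_iff₀ hε] at hM
        rw [div_lt_iff₀ (by positivity : (0:ℝ) < 2^(max m M + 2))]
        have hle : (2:ℝ)^M ≤ 2^(max m M + 2) := by
          apply pow_le_pow_right₀ one_le_two
          omega
        nlinarith [pow_pos (show (0:ℝ) < 2 by norm_num) M]
      rw [Real.dist_eq]
      linarith
    exact cauchySeq_tendsto_of_complete this
  choose F hF using hcauchy
  -- uniform estimate against the limit
  have hFu : ∀ n z, z ∈ L n → |F z - (u n).1 z| ≤ (1:ℝ)/2^(n+2) := by
    intro n z hz
    have htend : Tendsto (fun p => |(u (n+p)).1 z - (u n).1 z|) atTop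
        (𝓝 (|F z - (u n).1 z|)) := by
      have h1 : Tendsto (fun p => (u (n+p)).1 z) atTop (𝓝 (F z)) := by
        have := (hF z).comp (tendsto_add_atTop_nat n)
        simpa [Function.comp_def, Nat.add_comm] using this
      exact ((h1.sub tendsto_const_nhds).abs)
    refine le_of_tendsto htend ?_
    filter_upwards with p
    have := htel n p z hz
    have hpos : (0:ℝ) < 1/2^(n+p+2) := by positivity
    linarith
  have hFI : ∀ z, F z ∈ Icc (0:ℝ) 1 := by
    intro z
    constructor
    · exact le_of_tendsto_of_tendsto' tendsto_const_nhds (hF z) (fun n => (huI n z).1)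
    · exact le_of_tendsto_of_tendsto' (hF z) tendsto_const_nhds (fun n => (huI n z).2)
  refine ⟨F, ?_, ?_, hFI, ?_⟩
  · -- continuity
    rw [continuous_iff_continuousAt]
    intro z
    obtain ⟨m, hm⟩ := hmem z
    have hzint : z ∈ interior (L (m+1)) := by
      have := E.subset_interior_succ (N + m)
      have h2 : N + m + 1 = N + (m+1) := by omega
      rw [h2] at this
      exact this hm
    have huniform : TendstoUniformlyOn (fun n x => (u n).1 x) F atTop (L (m+1)) := by
      rw [Metric.tendstoUniformlyOn_iff]
      intro ε hε
      obtain ⟨M, hM⟩ := pow_unbounded_of_one_lt (1/ε) (one_lt_two (α := ℝ))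
      filter_upwards [eventually_ge_atTop (max (m+1) M)] with n hn
      intro x hx
      have hxL : x ∈ L n := hLmono ((le_max_left _ _).trans hn) hx
      have h1 := hFu n x hxL
      have h2 : (1:ℝ)/2^(n+2) < ε := by
        rw [div_lt_iff₀ hε] at hM
        rw [div_lt_iff₀ (by positivity : (0:ℝ) < 2^(n+2))]
        have hle : (2:ℝ)^M ≤ 2^(n+2) := by
          apply pow_le_pow_right₀ one_le_two
          omega
        nlinarith [pow_pos (show (0:ℝ) < 2 by norm_num) M]
      rw [Real.dist_eq]
      have : |F x - (u n).1 x| = |(u n).1 x - F x| := abs_sub_comm _ _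
      linarith [abs_sub_comm (F x) ((u n).1 x)]
    have hcont : ContinuousOn F (L (m+1)) :=
      huniform.continuousOn (Filter.Eventually.of_forall
        (fun n => (huc n).continuousOn)).frequently
    exact hcont.continuousAt (mem_interior_iff_mem_nhds.mp hzint)
  · -- isotone
    intro x y hxy
    obtain ⟨mx, hmx⟩ := hmem x
    obtain ⟨my, hmy⟩ := hmem y
    refine le_of_tendsto_of_tendsto (hF x) (hF y) ?_
    filter_upwards [eventually_ge_atTop (max mx my)] with n hn
    exact hum n x (hLmono ((le_max_left _ _).trans hn) hmx) y
      (hLmono ((le_max_right _ _).trans hn) hmy) hxy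
  · -- gap
    have h1 : F x₀ ≤ 1/4 := by
      have : ∀ p, (u p).1 x₀ ≤ 1/4 := by
        intro p
        have ht := htel 0 p x₀ hx₀
        have h0 : (u 0).1 x₀ = 0 := hf₀x
        rw [h0] at ht
        have habs := (abs_le.mp ht).2
        have hpos : (0:ℝ) < 1/2^(0+p+2) := by positivity
        have h14 : (1:ℝ)/2^(0+2) = 1/4 := by norm_num
        have hup : (u (0+p)).1 x₀ ≤ 1/4 := by linarith
        have hpe : (0:ℕ) + p = p := Nat.zero_add p
        rw [hpe] at hup
        exact hup
      exact le_of_tendsto_of_tendsto' (hF x₀) tendsto_const_nhds this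
    have h2 : (3:ℝ)/4 ≤ F y₀ := by
      have : ∀ p, (3:ℝ)/4 ≤ (u p).1 y₀ := by
        intro p
        have ht := htel 0 p y₀ hy₀
        have h0 : (u 0).1 y₀ = 1 := hf₀y
        rw [h0] at ht
        have habs := (abs_le.mp ht).1
        have hpos : (0:ℝ) < 1/2^(0+p+2) := by positivity
        have h14 : (1:ℝ)/2^(0+2) = 1/4 := by norm_num
        have hup : (3:ℝ)/4 ≤ (u (0+p)).1 y₀ := by linarith
        have hpe : (0:ℕ) + p = p := Nat.zero_add p
        rw [hpe] at hup
        exact hup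
      exact le_of_tendsto_of_tendsto' tendsto_const_nhds (hF y₀) this
    linarith

end Key



/-- **Levin's theorem**: on a second countable, locally compact Hausdorff space with a
closed reflexive transitive relation `≤`, there is a continuous function `T : X → ℝ` with
`x ≤ y → T x ≤ T y`, and (given `x ≤ y`) `T x = T y` iff also `y ≤ x`. -/
theorem levin_theorem {X : Type*} [TopologicalSpace X] [SecondCountableTopology X]
    [LocallyCompactSpace X] [T2Space X] (le : X → X → Prop)
    (le_refl : ∀ x, le x x) (le_trans : ∀ x y z, le x y → le y z → le x z)
    (le_closed : IsClosed {p : X × X | le p.1 p.2}) :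
    ∃ T : X → ℝ, Continuous T ∧
      ∀ x y, le x y → (T x ≤ T y ∧ (T x = T y ↔ le y x)) := by
  classical
  by_cases hS : ∃ p : X × X, le p.1 p.2 ∧ ¬ le p.2 p.1
  swap
  · push_neg at hS
    refine ⟨fun _ => 0, continuous_const, fun x y hxy => ⟨le_rfl, ?_, fun _ => rfl⟩⟩
    intro _
    exact hS (x, y) hxy
  set S := {p : X × X | le p.1 p.2 ∧ ¬ le p.2 p.1} with hSdef
  have hkey : ∀ i : ↥S, ∃ f : X → ℝ, Continuous f ∧ (∀ x y, le x y → f x ≤ f y) ∧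
      (∀ x, f x ∈ Set.Icc (0:ℝ) 1) ∧ f i.1.1 < f i.1.2 :=
    fun i => key_sep le le_refl le_trans le_closed i.1.1 i.1.2 i.2.2
  choose f hfc hfm hfI hfgap using hkey
  set W : ↥S → Set (X × X) := fun i => {p : X × X | f i p.1 < f i p.2} with hWdef
  have hWopen : ∀ i, IsOpen (W i) := fun i =>
    isOpen_lt ((hfc i).comp continuous_fst) ((hfc i).comp continuous_snd)
  obtain ⟨T, hTc, hTU⟩ := TopologicalSpace.isOpen_iUnion_countable W hWopen
  have hcover : ∀ p : ↥S, (p : X × X) ∈ ⋃ i ∈ T, W i := by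
    intro p
    rw [hTU]
    exact Set.mem_iUnion.2 ⟨p, hfgap p⟩
  obtain ⟨p₀, hp₀⟩ := hS
  have hTne : T.Nonempty := by
    obtain ⟨i, hiT, -⟩ := Set.mem_iUnion₂.mp (hcover ⟨p₀, hp₀⟩)
    exact ⟨i, hiT⟩
  obtain ⟨e, hTe⟩ := hTc.exists_eq_range hTne
  set g : ℕ → X → ℝ := fun n => f (e n) with hgdef
  have hsummable : ∀ x : X, Summable (fun n => (1/2:ℝ)^n * g n x) := by
    intro x
    refine Summable.of_nonneg_of_le (fun n => ?_) (fun n => ?_) summable_geometric_two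
    · exact mul_nonneg (by positivity) (hfI (e n) x).1
    · calc (1/2:ℝ)^n * g n x ≤ (1/2:ℝ)^n * 1 := by
            have := (hfI (e n) x).2
            have hp : (0:ℝ) ≤ (1/2:ℝ)^n := by positivity
            nlinarith
        _ = (1/2:ℝ)^n := mul_one _
  set Tf : X → ℝ := fun x => ∑' n, (1/2:ℝ)^n * g n x with hTfdef
  have hmono : ∀ x y, le x y → Tf x ≤ Tf y := by
    intro x y hxy
    exact Summable.tsum_le_tsum (fun n => mul_le_mul_of_nonneg_left (hfm (e n) x y hxy)
      (by positivity)) (hsummable x) (hsummable y)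
  have hstrict : ∀ x y, le x y → ¬ le y x → Tf x < Tf y := by
    intro x y hxy hnyx
    have hp : (⟨(x, y), hxy, hnyx⟩ : ↥S) ∈ (Set.univ : Set ↥S) := trivial
    obtain ⟨i, hiT, hpi⟩ := Set.mem_iUnion₂.mp (hcover ⟨(x, y), hxy, hnyx⟩)
    have : i ∈ Set.range e := hTe ▸ hiT
    obtain ⟨n, rfl⟩ := this
    have hlt : g n x < g n y := hpi
    refine Summable.tsum_lt_tsum (i := n) (fun k => mul_le_mul_of_nonneg_left
      (hfm (e k) x y hxy) (by positivity)) ?_ (hsummable x) (hsummable y)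
    exact mul_lt_mul_of_pos_left hlt (by positivity)
  refine ⟨Tf, ?_, ?_⟩
  · refine continuous_tsum (fun n => ?_) summable_geometric_two (fun n x => ?_)
    · exact continuous_const.mul (hfc (e n))
    · rw [Real.norm_eq_abs, abs_mul, abs_of_nonneg (by positivity : (0:ℝ) ≤ (1/2:ℝ)^n)]
      have h1 := (hfI (e n) x).1
      have h2 := (hfI (e n) x).2
      have hp : (0:ℝ) ≤ (1/2:ℝ)^n := by positivity
      calc (1/2:ℝ)^n * |g n x| = (1/2:ℝ)^n * g n x := by rw [abs_of_nonneg h1]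
        _ ≤ (1/2:ℝ)^n * 1 := by nlinarith
        _ = (1/2:ℝ)^n := mul_one _
  · intro x y hxy
    refine ⟨hmono x y hxy, ?_, fun hyx => le_antisymm (hmono x y hxy) (hmono y x hyx)⟩
    intro heq
    by_contra hnyx
    exact (ne_of_lt (hstrict x y hxy hnyx)) heq
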